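/- If a play ρ in a parity game with weights visits a designated restart vertex ⊤ infinitely often, and between any two consecutive visits to ⊤ there is a request answered or unanswered with cost exceeding the k-th counter value, where the counter values strictly increase, then limsup_{j→∞} Cor(ρ, j) = ∞, i.e., ρ violates the parity condition with weights. -/
import Mathlib


open scoped BigOperators

variable {V : Type*}

/-- The set of colors answering a request for color `c`. -/
def Ans (c : ℕ) : Set ℕ := {c' | c ≤ c' ∧ Even c'}

/-- The weight of the infix `v_j ⋯ v_i` of the play `ρ`. -/
def infixWeight (w : V → V → ℤ) (ρ : ℕ → V) (j i : ℕ) : ℤ :=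
  ∑ k ∈ Finset.Ico j i, w (ρ k) (ρ (k + 1))

/-- The amplitude of the infix `v_j ⋯ v_{j'}` of the play `ρ`: the maximum over
all its prefixes of the absolute value of the accumulated weight. -/
def infixAmpl (w : V → V → ℤ) (ρ : ℕ → V) (j j' : ℕ) : ℕ :=
  (Finset.Icc j j').sup fun i => (infixWeight w ρ j i).natAbs

/-- The cost-of-response at position `j` of the play `ρ`. -/
noncomputable def Cor (Ω : V → ℕ) (w : V → V → ℤ) (ρ : ℕ → V) (j : ℕ) : ℕ∞ :=
  sInf {x : ℕ∞ | ∃ j', j ≤ j' ∧ Ω (ρ j') ∈ Ans (Ω (ρ j)) ∧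
    x = (infixAmpl w ρ j j' : ℕ∞)}

/-- if a play `ρ` visits a designated restart vertex `⊤`
infinitely often (at the strictly increasing positions `t 0 < t 1 < ⋯`), and
between any two consecutive visits to `⊤` there is a position whose
cost-of-response exceeds the `k`-th counter value `b k`, where the counter
values strictly increase, then `limsup_{j→∞} Cor(ρ, j) = ∞`, i.e., `ρ` violates
the parity condition with weights. -/
theorem restarts_force_unbounded_cost (Ω : V → ℕ) (w : V → V → ℤ) (ρ : ℕ → V)
    (vT : V) (t : ℕ → ℕ) (ht : StrictMono t) (hvT : ∀ k, ρ (t k) = vT)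
    (b : ℕ → ℕ) (hb : StrictMono b) (pos : ℕ → ℕ)
    (hpos : ∀ k, t k < pos k ∧ pos k < t (k + 1))
    (hcost : ∀ k, (b k : ℕ∞) < Cor Ω w ρ (pos k)) :
    Filter.atTop.limsup (fun j => Cor Ω w ρ j) = ⊤ := by
  refine top_unique ?_
  rw [← ENat.iSup_natCast]
  refine iSup_le fun n => ?_
  refine Filter.le_limsup_of_frequently_le ?_
  rw [Filter.frequently_atTop]
  intro m
  refine ⟨pos (max m n), ?_, ?_⟩
  · exact le_trans (le_trans (le_max_left m n) (ht.le_apply)) (hpos (max m n)).1.le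
  · refine le_trans ?_ (hcost (max m n)).le
    exact_mod_cast le_trans (le_max_right m n) hb.le_apply
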